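/- arXiv:1705.09092 — 3 statements merged into one kernel-verified Lean document; each statement's English description precedes it below -/
import Mathlib

section
/- For any linkage type T_Γ = (V,E) with V finite, there is a continuous map Φ̃ : Êmb(T_Γ) → F̃ whose restriction to Emb(T_Γ) (viewed inside its completion) equals q∘Φ, where q : F → F̃ is the quotient map. -/
open scoped RealInnerProductSpace ENNReal
open Set Filter

noncomputable section

abbrev Pt (d : ℕ) := EuclideanSpace ℝ (Fin d)
abbrev Conf (V : Type*) [Fintype V] (d : ℕ) := PiLp 2 (fun _ : V => Pt d)

def closedSeg {V : Type*} {d : ℕ} (x : V → Pt d) (e : Sym2 V) : Set (Pt d) :=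
  Sym2.lift ⟨fun u v => segment ℝ (x u) (x v), fun u v => segment_symm ℝ (x u) (x v)⟩ e

def openSeg {V : Type*} {d : ℕ} (x : V → Pt d) (e : Sym2 V) : Set (Pt d) :=
  Sym2.lift ⟨fun u v => openSegment ℝ (x u) (x v), fun u v => openSegment_symm ℝ (x u) (x v)⟩ e

def edgeLen {V : Type*} {d : ℕ} (x : V → Pt d) (e : Sym2 V) : ℝ :=
  Sym2.lift ⟨fun u v => dist (x u) (x v), fun u v => dist_comm (x u) (x v)⟩ e

structure LinkageType (V : Type*) [Fintype V] where
  E : Finset (Sym2 V)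
  not_diag : ∀ e ∈ E, ¬ e.IsDiag

def IsLinkEmbedding {V : Type*} [Fintype V] {d : ℕ} (T : LinkageType V) (x : V → Pt d) : Prop :=
  Function.Injective x ∧
  ∀ e ∈ T.E, ∀ e' ∈ T.E, e ≠ e' →
    openSeg x e ∩ openSeg x e' = ∅ ∧
    ∀ p ∈ closedSeg x e ∩ closedSeg x e', ∃ v, v ∈ e ∧ v ∈ e' ∧ x v = p

def EmbSet {V : Type*} [Fintype V] (T : LinkageType V) (d : ℕ) : Set (Conf V d) :=
  {x | IsLinkEmbedding T x}

def CimmSet {V : Type*} [Fintype V] (T : LinkageType V) (d : ℕ) (ℓ : Sym2 V → ℝ) :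
    Set (Conf V d) := {x | ∀ e ∈ T.E, edgeLen x e = ℓ e}

def CSet {V : Type*} [Fintype V] (T : LinkageType V) (d : ℕ) (ℓ : Sym2 V → ℝ) :
    Set (Conf V d) := CimmSet T d ℓ ∩ EmbSet T d

def pathInf {X : Type*} [EMetricSpace X] (S : Set X) (x y : X) : ℝ≥0∞ :=
  ⨅ (γ : ℝ → X) (_ : ContinuousOn γ (Set.Icc 0 1)) (_ : γ 0 = x) (_ : γ 1 = y)
    (_ : Set.MapsTo γ (Set.Icc 0 1) S), eVariationOn γ (Set.Icc 0 1)

def dpath {X : Type*} [EMetricSpace X] (S : Set X) (x y : X) : ℝ :=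
  (min (pathInf S x y) 1).toReal

structure ModelsPathMetric {α : Type*} [EMetricSpace α] (S : Set α) (X : Type*)
    [MetricSpace X] (e : X → α) : Prop where
  bij : Set.BijOn e Set.univ S
  dist_eq : ∀ a b : X, dist a b = dpath S (e a) (e b)

abbrev Pt3 := EuclideanSpace ℝ (Fin 3)

def cross3 (a b : Pt3) : Pt3 :=
  (WithLp.equiv 2 (Fin 3 → ℝ)).symm
    ![a 1 * b 2 - a 2 * b 1, a 2 * b 0 - a 0 * b 2, a 0 * b 1 - a 1 * b 0]

/-- The sign of a real number, as an integer. -/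
def sgn (x : ℝ) : ℤ := if 0 < x then 1 else if x < 0 then -1 else 0

lemma sgn_mem (x : ℝ) : sgn x = -1 ∨ sgn x = 0 ∨ sgn x = 1 := by
  unfold sgn; split_ifs <;> simp

-- The linking sign `φ(s', s'') ∈ {-1,0,+1}` of the segments `[p₁,p₂]` and `[q₁,q₂]`:
-- `sign(w · (u' × u''))` where `w` joins a nearest pair of points, provided the nearest
-- points are interior to the segments and the segments are not coplanar; `0` otherwise.
open Classical in
noncomputable def segLinkSign (p₁ p₂ q₁ q₂ : Pt3) : ℤ :=
  if h : ∃ ab : Pt3 × Pt3,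
      ab.1 ∈ segment ℝ p₁ p₂ ∧ ab.2 ∈ segment ℝ q₁ q₂ ∧
      (∀ p ∈ segment ℝ p₁ p₂, ∀ q ∈ segment ℝ q₁ q₂, dist ab.1 ab.2 ≤ dist p q) ∧
      ab.1 ∈ openSegment ℝ p₁ p₂ ∧ ab.2 ∈ openSegment ℝ q₁ q₂ ∧
      ¬ Coplanar ℝ ({p₁, p₂, q₁, q₂} : Set Pt3)
  then sgn ⟪h.choose.2 - h.choose.1, cross3 (p₂ - p₁) (q₂ - q₁)⟫
  else 0

lemma segLinkSign_mem (p₁ p₂ q₁ q₂ : Pt3) :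
    segLinkSign p₁ p₂ q₁ q₂ = -1 ∨ segLinkSign p₁ p₂ q₁ q₂ = 0 ∨
      segLinkSign p₁ p₂ q₁ q₂ = 1 := by
  unfold segLinkSign
  split_ifs with h
  · exact sgn_mem _
  · simp


abbrev Sign := {n : ℤ // n = -1 ∨ n = 0 ∨ n = 1}

/-- The set `P` of ordered pairs of distinct edges of `T` having no common vertex. -/
def PairIdx {V : Type} [Fintype V] (T : LinkageType V) : Type :=
  {ξ : Sym2 V × Sym2 V // ξ.1 ∈ T.E ∧ ξ.2 ∈ T.E ∧ ξ.1 ≠ ξ.2 ∧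
    ∀ v : V, ¬ (v ∈ ξ.1 ∧ v ∈ ξ.2)}

/-- The linking-sign invariant `φ_ξ(y) ∈ {-1,0,1}` of the two segments of `y` indexed by the
pair of edges `ξ`. -/
noncomputable def phiXi {V : Type} [Fintype V] (T : LinkageType V) (y : Conf V 3)
    (ξ : PairIdx T) : Sign :=
  ⟨segLinkSign (y (Quot.out ξ.val.1).1) (y (Quot.out ξ.val.1).2)
      (y (Quot.out ξ.val.2).1) (y (Quot.out ξ.val.2).2),
    segLinkSign_mem _ _ _ _⟩

/-- The relation generating the equivalence `∼` on `F = (ℝ³)^V × {-1,0,1}^P`: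
`(x,α) ∼ (x,β)` when some `d_path`-Cauchy sequence in `Emb(T_Γ)` converging to `x` in
`(ℝ³)^V` takes the label value `α` and the label value `β` infinitely often. -/
def blowRel {V : Type} [Fintype V] (T : LinkageType V) (X : Type) [MetricSpace X]
    (e : X → Conf V 3) :
    (Conf V 3 × (PairIdx T → Sign)) → (Conf V 3 × (PairIdx T → Sign)) → Prop :=
  fun a b => a.1 = b.1 ∧ ∃ u : ℕ → X, CauchySeq u ∧
    Filter.Tendsto (fun n => e (u n)) Filter.atTop (nhds a.1) ∧
    ∀ N : ℕ, ∃ m ≥ N, ∃ n ≥ N,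
      (∀ ξ : PairIdx T, phiXi T (e (u m)) ξ = a.2 ξ) ∧
      (∀ ξ : PairIdx T, phiXi T (e (u n)) ξ = b.2 ξ)

instance : Finite Sign :=
  Finite.of_equiv ({-1,0,1} : Set ℤ)
    (Equiv.subtypeEquivRight (fun x => by simp only [Set.mem_insert_iff, Set.mem_singleton_iff]))

instance {V : Type} [Fintype V] (T : LinkageType V) : Finite (PairIdx T) := by
  unfold PairIdx; infer_instance

lemma aux_pigeon {D : Type*} [Finite D] (f : ℕ → D) : ∃ d, {n | f n = d}.Infinite := by
  obtain ⟨d, hd⟩ := Finite.exists_infinite_fiber f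
  exact ⟨d, by rwa [Set.infinite_coe_iff] at hd⟩

lemma aux_min_dist_le_dpath {X : Type*} [MetricSpace X] (S : Set X) (x y : X) :
    min (dist x y) 1 ≤ dpath S x y := by
  have h1 : min (edist x y) 1 ≤ min (pathInf S x y) 1 := by
    refine min_le_min ?_ le_rfl
    refine le_iInf fun γ => le_iInf fun hγ => le_iInf fun h0 => le_iInf fun h1 =>
      le_iInf fun _ => ?_
    calc edist x y = edist (γ 0) (γ 1) := by rw [h0, h1]
    _ ≤ eVariationOn γ (Set.Icc 0 1) := eVariationOn.edist_le γ (by simp) (by simp)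
  have h2 : (min (edist x y) 1).toReal ≤ (min (pathInf S x y) 1).toReal := by
    apply ENNReal.toReal_mono _ h1
    exact (min_le_right _ _).trans_lt ENNReal.one_lt_top |>.ne
  refine le_trans (le_of_eq ?_) h2
  rcases le_total (edist x y) 1 with h | h
  · rw [min_eq_left h, min_eq_left, edist_dist, ENNReal.toReal_ofReal dist_nonneg]
    rw [← ENNReal.ofReal_one] at h
    exact (ENNReal.ofReal_le_ofReal_iff (by norm_num)).mp (by rwa [edist_dist] at h)
  · rw [min_eq_right h, min_eq_right, ENNReal.toReal_one]
    rw [edist_dist, ← ENNReal.ofReal_one, ENNReal.ofReal_le_ofReal_iff dist_nonneg] at h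
    exact h

lemma aux_one_div_le {g n : ℕ} (h : n ≤ g) : (1 : ℝ) / (g + 1) ≤ 1 / (n + 1) :=
  one_div_le_one_div_of_le (by positivity) (by exact_mod_cast Nat.succ_le_succ h)

/-- the map `Φ : Emb(T_Γ) → F`, `x ↦ (x, (φ_ξ(x))_ξ)`, induces a continuous
map `Φ̃` on the completion `Êmb(T_Γ)` with values in the quotient `F̃ = F/∼`, whose
restriction to `Emb(T_Γ)` is `q ∘ Φ`.  Here `X` is an abstract metric space isometrically
identified via `e` with `(Emb(T_Γ), d_path)`, and `Êmb(T_Γ)` is its completion. -/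
theorem stmt8 {V : Type} [Fintype V] (T : LinkageType V)
    (X : Type) [MetricSpace X] (e : X → Conf V 3)
    (hm : ModelsPathMetric (EmbSet T 3) X e) :
    ∃ Φt : UniformSpace.Completion X → Quot (blowRel T X e),
      Continuous Φt ∧
      ∀ x : X, Φt x = Quot.mk (blowRel T X e) (e x, phiXi T (e x)) := by
  classical
  -- `e` is uniformly continuous
  have hkey : ∀ a b : X, min (dist (e a) (e b)) 1 ≤ dist a b := fun a b => by
    rw [hm.dist_eq a b]; exact aux_min_dist_le_dpath _ _ _
  have hue : UniformContinuous e := by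
    rw [Metric.uniformContinuous_iff]
    intro ε hε
    refine ⟨min ε 1, by positivity, fun {a b} h => ?_⟩
    have h2 : min (dist (e a) (e b)) 1 < min ε 1 := lt_of_le_of_lt (hkey a b) h
    rcases le_total (dist (e a) (e b)) 1 with hc | hc
    · rw [min_eq_left hc] at h2; exact h2.trans_le (min_le_left _ _)
    · rw [min_eq_right hc] at h2
      exact absurd h2 (not_lt.mpr (min_le_right _ _))
  set ee : UniformSpace.Completion X → Conf V 3 := UniformSpace.Completion.extension e
    with hee
  have heec : Continuous ee := UniformSpace.Completion.continuous_extension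
  have heecoe : ∀ x : X, ee ↑x = e x := fun x => UniformSpace.Completion.extension_coe hue x
  -- approximating sequences in `X` for points of the completion
  have happrox : ∀ (z : UniformSpace.Completion X) (n : ℕ),
      ∃ x : X, dist (↑x : UniformSpace.Completion X) z < 1/(n+1) := by
    intro z n
    obtain ⟨x, hx⟩ := Metric.denseRange_iff.mp
      (UniformSpace.Completion.denseRange_coe (α := X)) z (1/(n+1)) (by positivity)
    exact ⟨x, by rwa [dist_comm]⟩
  choose u hu using happrox
  -- choose, for each `z`, a label occurring infinitely often along the sequence `u z`
  have hsel : ∀ z, ∃ s : PairIdx T → Sign, {n | phiXi T (e (u z n)) = s}.Infinite :=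
    fun z => aux_pigeon _
  choose s hs using hsel
  -- a sequence realizing the chosen label at every index
  have hz : ∀ z : UniformSpace.Completion X, ∃ a : ℕ → X,
      Tendsto (fun n => (↑(a n) : UniformSpace.Completion X)) atTop (nhds z) ∧
      ∀ n, phiXi T (e (a n)) = s z := by
    intro z
    choose g hg1 hg2 using fun N => (hs z).exists_gt N
    refine ⟨fun n => u z (g n), ?_, fun n => hg1 n⟩
    rw [tendsto_iff_dist_tendsto_zero]
    refine squeeze_zero (fun n => dist_nonneg) (g := fun n : ℕ => 1/((n:ℝ)+1)) (fun n => ?_)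
      tendsto_one_div_add_atTop_nhds_zero_nat
    exact le_trans (hu z (g n)).le (aux_one_div_le (hg2 n).le)
  choose a ha1 ha2 using hz
  -- the mixing lemma: two label sources at the same point give a `blowRel` relation
  have hmix : ∀ (ζ : UniformSpace.Completion X) (p q : ℕ → X) (s₁ s₂ : PairIdx T → Sign),
      Tendsto (fun n => (↑(p n) : UniformSpace.Completion X)) atTop (nhds ζ) →
      Tendsto (fun n => (↑(q n) : UniformSpace.Completion X)) atTop (nhds ζ) →
      (∀ n, phiXi T (e (p n)) = s₁) → (∀ n, phiXi T (e (q n)) = s₂) →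
      blowRel T X e (ee ζ, s₁) (ee ζ, s₂) := by
    intro ζ p q s₁ s₂ hp hq hlp hlq
    set c : ℕ → X := fun n => if Even n then p n else q n with hc
    have hct : Tendsto (fun n => (↑(c n) : UniformSpace.Completion X)) atTop (nhds ζ) := by
      rw [tendsto_iff_dist_tendsto_zero] at hp hq ⊢
      refine squeeze_zero (fun n => dist_nonneg)
        (g := fun n => max (dist (↑(p n) : UniformSpace.Completion X) ζ)
          (dist (↑(q n) : UniformSpace.Completion X) ζ)) (fun n => ?_) ?_
      · by_cases h : Even n
        · simp only [hc, if_pos h]; exact le_max_left _ _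
        · simp only [hc, if_neg h]; exact le_max_right _ _
      · simpa using hp.max hq
    have hcc : CauchySeq c := by
      have h1 : CauchySeq (fun n => (↑(c n) : UniformSpace.Completion X)) := hct.cauchySeq
      rw [Metric.cauchySeq_iff] at h1 ⊢
      simpa [UniformSpace.Completion.dist_eq] using h1
    refine ⟨rfl, c, hcc, ?_, ?_⟩
    · have h2 : Tendsto (fun n => ee ↑(c n)) atTop (nhds (ee ζ)) :=
        (heec.tendsto ζ).comp hct
      have h3 : (fun n => e (c n)) = fun n => ee ↑(c n) :=
        funext fun n => (heecoe (c n)).symm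
      rw [show ((ee ζ, s₁) : Conf V 3 × (PairIdx T → Sign)).1 = ee ζ from rfl, h3]
      exact h2
    · intro N
      refine ⟨2*N, by omega, 2*N+1, by omega, fun ξ => ?_, fun ξ => ?_⟩
      · have hev : Even (2*N) := ⟨N, two_mul N⟩
        have : c (2*N) = p (2*N) := if_pos hev
        rw [this, hlp (2*N)]
      · have hodd : ¬ Even (2*N+1) := by simp [Nat.even_add_one, parity_simps]
        have : c (2*N+1) = q (2*N+1) := if_neg hodd
        rw [this, hlq (2*N+1)]
  refine ⟨fun z => Quot.mk _ (ee z, s z), ?_, ?_⟩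
  · -- continuity
    rw [continuous_def]
    intro U hU
    have hW : IsOpen (Quot.mk (blowRel T X e) ⁻¹' U) := hU.preimage continuous_quot_mk
    set W := Quot.mk (blowRel T X e) ⁻¹' U with hWdef
    rw [Metric.isOpen_iff]
    intro z hz0
    by_contra hcon
    push_neg at hcon
    have hmemz : (ee z, s z) ∈ W := hz0
    -- bad points arbitrarily close to z
    have hbad : ∀ n : ℕ, ∃ w : UniformSpace.Completion X,
        dist w z < 1/(n+1) ∧ (ee w, s w) ∉ W := by
      intro n
      obtain ⟨w, hw1, hw2⟩ := Set.not_subset.mp (hcon (1/(n+1)) (by positivity))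
      exact ⟨w, Metric.mem_ball.mp hw1, hw2⟩
    choose w hw1 hw2 using hbad
    -- pigeonhole on the labels of the bad points
    obtain ⟨s₀, hs₀⟩ := aux_pigeon (fun n => s (w n))
    choose g hg1 hg2 using fun N => hs₀.exists_gt N
    -- a sequence tending to z with constant label s₀
    have hA : ∀ n : ℕ, ∃ pz : X,
        dist (↑pz : UniformSpace.Completion X) z < 1/(n+1) + 1/(n+1) ∧
        phiXi T (e pz) = s₀ := by
      intro n
      obtain ⟨N, hN⟩ := (Metric.tendsto_atTop.mp (ha1 (w (g n)))) (1/(n+1)) (by positivity)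
      refine ⟨a (w (g n)) N, ?_, by rw [ha2 (w (g n)) N, hg1 n]⟩
      calc dist (↑(a (w (g n)) N) : UniformSpace.Completion X) z
          ≤ dist (↑(a (w (g n)) N) : UniformSpace.Completion X) (w (g n))
            + dist (w (g n)) z := dist_triangle _ _ _
        _ < 1/(n+1) + 1/(n+1) :=
            add_lt_add (hN N le_rfl)
              ((hw1 (g n)).trans_le (aux_one_div_le (hg2 n).le))
    choose A hA1 hA2 using hA
    have hAt : Tendsto (fun n => (↑(A n) : UniformSpace.Completion X)) atTop (nhds z) := by
      rw [tendsto_iff_dist_tendsto_zero]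
      refine squeeze_zero (fun n => dist_nonneg)
        (g := fun n : ℕ => 1/((n:ℝ)+1) + 1/((n:ℝ)+1)) (fun n => (hA1 n).le) ?_
      simpa using (tendsto_one_div_add_atTop_nhds_zero_nat :
          Tendsto (fun n : ℕ => 1 / ((n:ℝ)+1)) atTop (nhds 0)).add
        tendsto_one_div_add_atTop_nhds_zero_nat
    -- blowRel identifies (ee z, s₀) with (ee z, s z), so (ee z, s₀) ∈ W
    have hrel : blowRel T X e (ee z, s₀) (ee z, s z) :=
      hmix z A (a z) s₀ (s z) hAt (ha1 z) hA2 (ha2 z)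
    have hmem0 : (ee z, s₀) ∈ W := by
      have : Quot.mk (blowRel T X e) (ee z, s₀) = Quot.mk (blowRel T X e) (ee z, s z) :=
        Quot.sound hrel
      simp only [hWdef, Set.mem_preimage, this]
      exact hmemz
    -- W is open in the product, extract a box neighborhood
    obtain ⟨O1, O2, hO1, hO2, hzO1, hsO2, hsub⟩ := isOpen_prod_iff.mp hW (ee z) s₀ hmem0
    obtain ⟨δ, hδ, hball⟩ := Metric.isOpen_iff.mp (hO1.preimage heec) z (by exact hzO1)
    obtain ⟨n, hn⟩ := exists_nat_one_div_lt hδ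
    have hwO1 : ee (w (g n)) ∈ O1 := by
      apply hball
      rw [Metric.mem_ball]
      calc dist (w (g n)) z < 1/(g n + 1) := hw1 (g n)
        _ ≤ 1/(n+1) := aux_one_div_le (hg2 n).le
        _ < δ := hn
    have : (ee (w (g n)), s (w (g n))) ∈ W := by
      rw [hg1 n]
      exact hsub (Set.mk_mem_prod hwO1 hsO2)
    exact hw2 (g n) this
  · -- restriction to X
    intro x
    have h1 := hmix (↑x) (a ↑x) (fun _ => x) (s ↑x) (phiXi T (e x))
      (ha1 ↑x) tendsto_const_nhds (ha2 ↑x) (fun _ => rfl)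
    rw [heecoe x] at h1
    show Quot.mk _ (ee ↑x, s ↑x) = _
    rw [heecoe x]
    exact Quot.sound h1

end
end

section
/- Let T_Γ = (V,E) be a linkage type and (x_i) a Cauchy sequence in (Emb(T_Γ), d_path). Then there exist a subsequence (x_{n_k}), a continuous path γ : [0,1] → (ℝ^d)^V with γ((0,1]) ⊆ Emb(T_Γ), and a strictly decreasing sequence (t_k) in (0,1] with t_k → 0 such that γ(t_k) = x_{n_k} for all k; moreover γ(0) equals the limit of (x_i) in the complete space (ℝ^d)^V. -/
open scoped RealInnerProductSpace ENNReal
open Set Filter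

noncomputable section

private lemma glueCO {X : Type*} [TopologicalSpace X] {f : ℝ → X} {s t : Set ℝ}
    (hs : IsClosed s) (ht : IsClosed t) (hf : ContinuousOn f s) (hg : ContinuousOn f t) :
    ContinuousOn f (s ∪ t) := by
  intro y hy
  have h1 : ContinuousWithinAt f s y := by
    by_cases h : y ∈ s
    · exact hf y h
    · exact continuousWithinAt_of_notMem_closure (by rwa [hs.closure_eq])
  have h2 : ContinuousWithinAt f t y := by
    by_cases h : y ∈ t
    · exact hg y h
    · exact continuousWithinAt_of_notMem_closure (by rwa [ht.closure_eq])
  exact h1.union h2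

private lemma pathInf_lt_exists {X : Type*} [EMetricSpace X] {S : Set X} {a b : X} {B : ℝ≥0∞}
    (h : pathInf S a b < B) :
    ∃ g : ℝ → X, ContinuousOn g (Set.Icc 0 1) ∧ g 0 = a ∧ g 1 = b ∧
      Set.MapsTo g (Set.Icc 0 1) S ∧ eVariationOn g (Set.Icc 0 1) ≤ B := by
  simp only [pathInf, iInf_lt_iff] at h
  obtain ⟨g, h1, h2, h3, h4, h5⟩ := h
  exact ⟨g, h1, h2, h3, h4, h5.le⟩

private lemma edist_le_pathInf {X : Type*} [EMetricSpace X] (S : Set X) (a b : X) :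
    edist a b ≤ pathInf S a b := by
  refine le_iInf fun g => le_iInf fun hc => le_iInf fun h0 => le_iInf fun h1 =>
    le_iInf fun hm => ?_
  rw [← h0, ← h1]
  exact eVariationOn.edist_le g ⟨le_refl (0:ℝ), zero_le_one⟩ ⟨zero_le_one, le_refl (1:ℝ)⟩

private lemma dpath_lt_extract {X : Type*} [EMetricSpace X] {S : Set X} {a b : X} {e : ℝ}
    (he : e < 1) (h : dpath S a b < e) : pathInf S a b < ENNReal.ofReal e := by
  have h1 : min (pathInf S a b) 1 ≠ ⊤ :=
    ne_top_of_le_ne_top (by simp) (min_le_right _ _)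
  have h2 : min (pathInf S a b) 1 < ENNReal.ofReal e :=
    (ENNReal.lt_ofReal_iff_toReal_lt h1).2 h
  rcases min_lt_iff.1 h2 with h3 | h3
  · exact h3
  · exact absurd (h3.trans (ENNReal.ofReal_lt_one.2 he)) (lt_irrefl _)

private lemma edist_lt_of_dpath_lt {X : Type*} [EMetricSpace X] {S : Set X} {a b : X} {e : ℝ}
    (he : e < 1) (h : dpath S a b < e) : edist a b < ENNReal.ofReal e :=
  lt_of_le_of_lt (edist_le_pathInf S a b) (dpath_lt_extract he h)

/-- every `d_path`-Cauchy sequence in `Emb(T_Γ)` has a subsequence lying on a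
continuous path `γ : [0,1] → (ℝ^d)^V` with `γ((0,1]) ⊆ Emb(T_Γ)`, sampled at a strictly
decreasing sequence of parameters tending to `0`, and `γ(0)` is the limit of the sequence
in `(ℝ^d)^V`. -/
theorem stmt17 {V : Type} [Fintype V] (T : LinkageType V) (d : ℕ) (hd : 1 ≤ d)
    (x : ℕ → Conf V d) (hmem : ∀ i, x i ∈ EmbSet T d)
    (hC : ∀ ε : ℝ, 0 < ε → ∃ N : ℕ, ∀ m ≥ N, ∀ n ≥ N,
      dpath (EmbSet T d) (x m) (x n) < ε) :
    ∃ (nk : ℕ → ℕ) (γ : ℝ → Conf V d) (t : ℕ → ℝ),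
      StrictMono nk ∧
      ContinuousOn γ (Set.Icc 0 1) ∧
      Set.MapsTo γ (Set.Ioc 0 1) (EmbSet T d) ∧
      StrictAnti t ∧ (∀ k, t k ∈ Set.Ioc (0:ℝ) 1) ∧
      Filter.Tendsto t Filter.atTop (nhds 0) ∧
      (∀ k, γ (t k) = x (nk k)) ∧
      Filter.Tendsto x Filter.atTop (nhds (γ 0)) := by
  classical
  set S := EmbSet T d with hS
  -- Cauchy in the ambient complete space, get the limit L
  have hcauchy : CauchySeq x := by
    rw [Metric.cauchySeq_iff]
    intro ε hε
    obtain ⟨N, hN⟩ := hC (min ε 2⁻¹) (lt_min hε (by norm_num))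
    refine ⟨N, fun m hm n hn => ?_⟩
    have h2 := edist_lt_of_dpath_lt (lt_of_le_of_lt (min_le_right (ε:ℝ) 2⁻¹) (by norm_num))
      (hN m hm n hn)
    rw [edist_lt_ofReal] at h2
    exact h2.trans_le (min_le_left _ _)
  obtain ⟨L, hL⟩ := cauchySeq_tendsto_of_complete hcauchy
  have hb : ∀ k : ℕ, (0:ℝ) < 2⁻¹ ^ (k+2) := fun k => pow_pos (by norm_num) _
  have hb1 : ∀ k : ℕ, ((2:ℝ)⁻¹ ^ (k+2)) < 1 := fun k =>
    pow_lt_one₀ (by norm_num) (by norm_num) (by omega)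
  choose N hN using fun k => hC ((2:ℝ)⁻¹ ^ (k+2)) (hb k)
  -- the subsequence
  set nk : ℕ → ℕ := fun k => Nat.rec (N 0) (fun k ih => max (ih+1) (N (k+1))) k with hnk
  have hnk_succ : ∀ k, nk (k+1) = max (nk k + 1) (N (k+1)) := fun k => rfl
  have hnkN : ∀ k, N k ≤ nk k := by
    intro k
    cases k with
    | zero => exact le_refl _
    | succ j => rw [hnk_succ j]; exact le_max_right _ _
  have hnkmono : StrictMono nk := by
    apply strictMono_nat_of_lt_succ
    intro k
    rw [hnk_succ k]
    exact lt_of_lt_of_le (Nat.lt_succ_self _) (le_max_left _ _)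
  have hdp : ∀ k, dpath S (x (nk (k+1))) (x (nk k)) < 2⁻¹ ^ (k+2) := by
    intro k
    have h1 : N k ≤ nk k := hnkN k
    have h2 : N k ≤ nk (k+1) := h1.trans (hnkmono (Nat.lt_succ_self k)).le
    exact hN k _ h2 _ h1
  have hEx : ∀ k, ∃ g : ℝ → Conf V d, ContinuousOn g (Set.Icc 0 1) ∧ g 0 = x (nk (k+1)) ∧
      g 1 = x (nk k) ∧ Set.MapsTo g (Set.Icc 0 1) S ∧
      eVariationOn g (Set.Icc 0 1) ≤ ENNReal.ofReal (2⁻¹ ^ (k+2)) :=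
    fun k => pathInf_lt_exists (dpath_lt_extract (hb1 k) (hdp k))
  choose Γ hΓc hΓ0 hΓ1 hΓm hΓv using hEx
  -- the parameter sequence
  set t : ℕ → ℝ := fun k => (2:ℝ)⁻¹ ^ k with ht
  have ht_pos : ∀ k, 0 < t k := fun k => pow_pos (by norm_num) k
  have ht_anti : StrictAnti t := fun m n h =>
    pow_lt_pow_right_of_lt_one₀ (by norm_num) (by norm_num) h
  have ht_le1 : ∀ k, t k ≤ 1 := fun k => pow_le_one₀ (by norm_num) (by norm_num)
  have ht_lim : Tendsto t atTop (nhds 0) :=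
    tendsto_pow_atTop_nhds_zero_of_lt_one (by norm_num) (by norm_num)
  have ht_succ_lt : ∀ k, t (k+1) < t k := fun k => ht_anti (Nat.lt_succ_self k)
  -- affine reparametrizations
  set φ : ℕ → ℝ → ℝ := fun k s => (s - t (k+1)) / (t k - t (k+1)) with hφ
  have hφcont : ∀ k, Continuous (φ k) := fun k =>
    (continuous_id.sub continuous_const).div_const _
  have hφmem : ∀ k s, s ∈ Set.Icc (t (k+1)) (t k) → φ k s ∈ Set.Icc (0:ℝ) 1 := by
    intro k s hs
    constructor
    · exact div_nonneg (by linarith [hs.1]) (by linarith [ht_succ_lt k])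
    · rw [div_le_one (by linarith [ht_succ_lt k])]; linarith [hs.2]
  have hφ0 : ∀ k, φ k (t (k+1)) = 0 := by intro k; simp [hφ]
  have hφ1 : ∀ k, φ k (t k) = 1 := fun k =>
    div_self (sub_ne_zero.2 (ht_succ_lt k).ne')
  have huniq : ∀ {k m : ℕ} {s : ℝ}, t (k+1) < s → s ≤ t k → t (m+1) < s → s ≤ t m → k = m := by
    intro k m s h1 h2 h3 h4
    by_contra hne
    rcases Nat.lt_or_ge k m with h | h
    · have : t m ≤ t (k+1) := ht_anti.antitone (by omega)
      linarith
    · have hmk : m < k := lt_of_le_of_ne h (Ne.symm hne)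
      have : t k ≤ t (m+1) := ht_anti.antitone (by omega)
      linarith
  -- the glued path
  set γ : ℝ → Conf V d := fun s =>
    if h : ∃ k, t (k+1) < s ∧ s ≤ t k then Γ h.choose (φ h.choose s) else L with hγ
  have hpiece : ∀ k s, t (k+1) < s → s ≤ t k → γ s = Γ k (φ k s) := by
    intro k s h1 h2
    have hex : ∃ j, t (j+1) < s ∧ s ≤ t j := ⟨k, h1, h2⟩
    rw [hγ]
    simp only
    rw [dif_pos hex]
    have h5 : hex.choose = k := huniq hex.choose_spec.1 hex.choose_spec.2 h1 h2
    rw [h5]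
  have hpiece' : ∀ k s, s ∈ Set.Icc (t (k+1)) (t k) → γ s = Γ k (φ k s) := by
    intro k s hs
    rcases eq_or_lt_of_le hs.1 with he | hlt
    · rw [← he, hpiece (k+1) (t (k+1)) (ht_succ_lt (k+1)) le_rfl, hφ1 (k+1), hΓ1 (k+1),
        hφ0 k, hΓ0 k]
    · exact hpiece k s hlt hs.2
  have hγ0 : γ 0 = L := by
    rw [hγ]
    simp only
    rw [dif_neg]
    rintro ⟨k, h1, _⟩
    linarith [ht_pos (k+1)]
  have hfind : ∀ s : ℝ, 0 < s → s ≤ 1 → ∃ k, t (k+1) < s ∧ s ≤ t k := by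
    intro s hs0 hs1
    have hex : ∃ k, t (k+1) < s := by
      obtain ⟨n, hn⟩ := (ht_lim.eventually (gt_mem_nhds hs0)).exists
      exact ⟨n, lt_of_le_of_lt (ht_anti.antitone (Nat.le_succ n)) hn⟩
    refine ⟨Nat.find hex, Nat.find_spec hex, ?_⟩
    rcases Nat.eq_zero_or_pos (Nat.find hex) with h0 | hpos
    · rw [h0]; simpa [ht] using hs1
    · have h1 := Nat.find_min hex (m := Nat.find hex - 1) (by omega)
      have h2 : s ≤ t ((Nat.find hex - 1) + 1) := not_lt.1 h1
      have h3 : Nat.find hex - 1 + 1 = Nat.find hex := by omega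
      rwa [h3] at h2
  have hγt : ∀ k, γ (t k) = x (nk k) := by
    intro k
    rw [hpiece k (t k) (ht_succ_lt k) le_rfl, hφ1 k, hΓ1 k]
  have hmaps : Set.MapsTo γ (Set.Ioc 0 1) S := by
    rintro s ⟨hs0, hs1⟩
    obtain ⟨k, h1, h2⟩ := hfind s hs0 hs1
    rw [hpiece k s h1 h2]
    exact hΓm k (hφmem k s ⟨h1.le, h2⟩)
  -- distance estimates
  have hstep : ∀ k, dist (x (nk (k+1))) (x (nk k)) ≤ 2⁻¹ ^ (k+2) := by
    intro k
    have h := eVariationOn.edist_le (Γ k) (s := Set.Icc (0:ℝ) 1) (x := (0:ℝ)) (y := 1)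
      (Set.mem_Icc.2 ⟨le_refl (0:ℝ), zero_le_one⟩) (Set.mem_Icc.2 ⟨zero_le_one, le_refl (1:ℝ)⟩)
    rw [hΓ0, hΓ1] at h
    exact (edist_le_ofReal (hb k).le).1 (h.trans (hΓv k))
  have hchain : ∀ p j, p ≤ j → dist (x (nk j)) (x (nk p)) ≤ 2⁻¹ ^ (p+1) - (2:ℝ)⁻¹ ^ (j+1) := by
    intro p j hpj
    induction j, hpj using Nat.le_induction with
    | base => simp
    | succ j hpj ih =>
      have h1 := hstep j
      have h2 := dist_triangle (x (nk (j+1))) (x (nk j)) (x (nk p))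
      have h4 : (2:ℝ)⁻¹ ^ (j+2) + 2⁻¹ ^ (j+2) = 2⁻¹ ^ (j+1) := by
        rw [show j + 2 = (j+1) + 1 by omega, pow_succ]; ring
      linarith
  have hnk_tendsto : Tendsto (fun j => x (nk j)) atTop (nhds L) := hL.comp hnkmono.tendsto_atTop
  have htail : ∀ p, dist L (x (nk p)) ≤ 2⁻¹ ^ (p+1) := by
    intro p
    have h1 : Tendsto (fun j => dist (x (nk j)) (x (nk p))) atTop (nhds (dist L (x (nk p)))) :=
      hnk_tendsto.dist tendsto_const_nhds
    apply le_of_tendsto h1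
    filter_upwards [eventually_ge_atTop p] with j hj
    have := hchain p j hj
    have hp := pow_pos (show (0:ℝ) < 2⁻¹ by norm_num) (j+1)
    linarith
  -- continuity on each piece
  have hγcont_piece : ∀ k, ContinuousOn γ (Set.Icc (t (k+1)) (t k)) := by
    intro k
    have hF : ContinuousOn (fun s => Γ k (φ k s)) (Set.Icc (t (k+1)) (t k)) :=
      (hΓc k).comp ((hφcont k).continuousOn) (fun s hs => hφmem k s hs)
    exact hF.congr (fun s hs => hpiece' k s hs)
  have hglue : ∀ m, ContinuousOn γ (Set.Icc (t m) 1) := by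
    intro m
    induction m with
    | zero =>
      have h0 : t 0 = 1 := by simp [ht]
      rw [h0, Set.Icc_self]
      exact continuousOn_singleton γ 1
    | succ m ih =>
      have heq : Set.Icc (t (m+1)) (t m) ∪ Set.Icc (t m) 1 = Set.Icc (t (m+1)) 1 :=
        Set.Icc_union_Icc_eq_Icc (ht_succ_lt m).le (ht_le1 m)
      rw [← heq]
      exact glueCO isClosed_Icc isClosed_Icc (hγcont_piece m) ih
  -- the full continuity
  have hcont : ContinuousOn γ (Set.Icc 0 1) := by
    intro s hs
    rcases eq_or_lt_of_le hs.1 with h0 | hpos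
    · -- continuity at 0
      rw [← h0]
      rw [ContinuousWithinAt, hγ0, Metric.tendsto_nhdsWithin_nhds]
      intro ε hε
      obtain ⟨k, hk⟩ := exists_pow_lt_of_lt_one hε (show (2:ℝ)⁻¹ < 1 by norm_num)
      refine ⟨t k, ht_pos k, ?_⟩
      intro s' hs' hd
      rcases eq_or_lt_of_le hs'.1 with h0' | hpos'
      · rw [← h0', hγ0]; simpa using hε
      · have hslt : s' < t k := by
          rw [Real.dist_eq, sub_zero, abs_of_pos hpos'] at hd
          exact hd
        obtain ⟨m, h1, h2⟩ := hfind s' hpos' hs'.2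
        have hmk : k ≤ m := by
          by_contra h
          push_neg at h
          have : t k ≤ t (m+1) := ht_anti.antitone (by omega)
          linarith
        have hd1 : dist (γ s') (x (nk (m+1))) ≤ 2⁻¹ ^ (m+2) := by
          rw [hpiece m s' h1 h2]
          rw [← hΓ0 m]
          have h := eVariationOn.edist_le (Γ m) (s := Set.Icc (0:ℝ) 1)
            (hφmem m s' ⟨h1.le, h2⟩) (Set.mem_Icc.2 ⟨le_refl (0:ℝ), zero_le_one⟩)
          exact (edist_le_ofReal (hb m).le).1 (h.trans (hΓv m))
        have hd2 := htail (m+1)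
        rw [dist_comm L] at hd2
        have htri := dist_triangle (γ s') (x (nk (m+1))) L
        have hsum : (2:ℝ)⁻¹ ^ (m+2) + 2⁻¹ ^ (m+2) = 2⁻¹ ^ (m+1) := by
          rw [show m + 2 = (m+1) + 1 by omega, pow_succ]; ring
        have hpow : (2:ℝ)⁻¹ ^ (m+1) ≤ 2⁻¹ ^ k :=
          pow_le_pow_of_le_one (by norm_num) (by norm_num) (by omega)
        calc dist (γ s') L ≤ dist (γ s') (x (nk (m+1))) + dist (x (nk (m+1))) L := htri
          _ ≤ 2⁻¹ ^ (m+2) + 2⁻¹ ^ (m+2) := by linarith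
          _ = 2⁻¹ ^ (m+1) := hsum
          _ ≤ 2⁻¹ ^ k := hpow
          _ < ε := hk
    · -- continuity at s > 0
      obtain ⟨m, hm⟩ := (ht_lim.eventually (gt_mem_nhds hpos)).exists
      have hcw : ContinuousWithinAt γ (Set.Icc (t m) 1) s := hglue m s ⟨hm.le, hs.2⟩
      apply hcw.mono_of_mem_nhdsWithin
      rw [mem_nhdsWithin]
      exact ⟨Set.Ioi (t m), isOpen_Ioi, hm, fun y hy => ⟨hy.1.le, hy.2.2⟩⟩
  refine ⟨nk, γ, t, hnkmono, hcont, hmaps, ht_anti, fun k => ⟨ht_pos k, ht_le1 k⟩, ht_lim,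
    hγt, ?_⟩
  rw [hγ0]
  exact hL


end
end

section
/- Let T_Γ = (V,E) be a linkage type. For every rectifiable continuous path γ : [0,1] → (ℝ^d)^V with γ((0,1]) ⊆ Emb(T_Γ) and every sequence (t_i) in (0,1] with t_i → 0, the sequence (γ(t_i)) is a Cauchy sequence in (Emb(T_Γ), d_path), and the point φ(γ) ∈ Êmb(T_Γ) it represents is independent of the choice of the sequence (t_i). Moreover, the resulting map φ, from the set of all such rectifiable paths to Êmb(T_Γ), is surjective. -/
open scoped RealInnerProductSpace ENNReal
open Set Filter

noncomputable section

lemma evarIcc01_le {E : Type*} [PseudoEMetricSpace E] (f : ℝ → E) (A B : ℝ≥0∞)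
    (hA : ∀ t ∈ Icc (0:ℝ) 1, edist (f 0) (f t) ≤ A)
    (hB : ∀ s : ℝ, 0 < s → s ≤ 1 → eVariationOn f (Icc s 1) ≤ B) :
    eVariationOn f (Icc 0 1) ≤ A + B := by
  rw [eVariationOn]
  refine iSup_le ?_
  rintro ⟨n, u, hu, us⟩
  dsimp only
  by_cases hn : 0 < u n
  · set k := sInf {i | 0 < u i} with hk
    have hne : {i | 0 < u i}.Nonempty := ⟨n, hn⟩
    have huk : 0 < u k := Nat.sInf_mem hne
    have hlt : ∀ m, m < k → u m = 0 := by
      intro m hm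
      by_contra h
      have h0 : 0 ≤ u m := (us m).1
      have : 0 < u m := lt_of_le_of_ne h0 (fun h' => h h'.symm)
      exact absurd (Nat.sInf_le this) (not_le.2 hm)
    have hkn : k ≤ n := Nat.sInf_le hn
    clear_value k
    have hsplit : ∑ i ∈ Finset.range n, edist (f (u (i + 1))) (f (u i)) =
        (∑ i ∈ Finset.range k, edist (f (u (i + 1))) (f (u i))) +
          ∑ i ∈ Finset.Ico k n, edist (f (u (i + 1))) (f (u i)) := by
      rw [Finset.range_eq_Ico, Finset.range_eq_Ico]
      exact (Finset.sum_Ico_consecutive (fun i => edist (f (u (i + 1))) (f (u i))) (Nat.zero_le k) hkn).symm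
    rw [hsplit]
    refine add_le_add ?_ ?_
    · rcases Nat.eq_zero_or_pos k with hk0 | hk0
      · simp [hk0]
      · obtain ⟨m, rfl⟩ := Nat.exists_eq_succ_of_ne_zero hk0.ne'
        rw [Finset.sum_range_succ]
        have hz : ∑ i ∈ Finset.range m, edist (f (u (i + 1))) (f (u i)) = 0 := by
          refine Finset.sum_eq_zero fun i hi => ?_
          have hi' := Finset.mem_range.1 hi
          rw [hlt i (hi'.trans (Nat.lt_succ_self m)), hlt (i+1) (Nat.succ_lt_succ hi'),
            edist_self]
        rw [hz, zero_add, hlt m (Nat.lt_succ_self m), edist_comm]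
        exact hA (u (m+1)) (us (m+1))
    · have hmono : MonotoneOn u (Icc k n) := (hu.monotoneOn _)
      have husk : ∀ i ∈ Icc k n, u i ∈ Icc (u k) 1 :=
        fun i hi => ⟨hu hi.1, (us i).2⟩
      exact (eVariationOn.sum_le_of_monotoneOn_Icc (f := f) hmono husk).trans
        (hB (u k) huk (us k).2)
  · have hz : ∀ i, i ≤ n → u i = 0 := by
      intro i hi
      have h1 : u i ≤ u n := hu hi
      have h2 : 0 ≤ u i := (us i).1
      have h3 : u n ≤ 0 := not_lt.1 hn
      linarith
    have : ∀ i ∈ Finset.range n, edist (f (u (i + 1))) (f (u i)) = 0 := by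
      intro i hi
      have hi' := Finset.mem_range.1 hi
      rw [hz i hi'.le, hz (i+1) hi', edist_self]
    rw [Finset.sum_congr rfl this]
    simp
lemma pathInf_le_evar {X : Type*} [EMetricSpace X] (S : Set X) (γ : ℝ → X)
    (hγ : ContinuousOn γ (Icc 0 1)) (hmap : MapsTo γ (Ioc 0 1) S)
    {s t : ℝ} (hs : s ∈ Ioc (0:ℝ) 1) (ht : t ∈ Ioc (0:ℝ) 1) :
    pathInf S (γ s) (γ t) ≤ eVariationOn γ (Icc (min s t) (max s t)) := by
  set φ : ℝ → ℝ := fun r => s + r * (t - s) with hφ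
  have hmem : MapsTo φ (Icc 0 1) (Icc (min s t) (max s t)) := by
    intro r hr
    rcases le_total s t with h | h
    · rw [min_eq_left h, max_eq_right h]
      constructor <;> (simp only [hφ]; nlinarith [hr.1, hr.2])
    · rw [min_eq_right h, max_eq_left h]
      constructor <;> (simp only [hφ]; nlinarith [hr.1, hr.2])
  have hsub : Icc (min s t) (max s t) ⊆ Ioc (0:ℝ) 1 := by
    intro x hx
    exact ⟨lt_of_lt_of_le (lt_min hs.1 ht.1) hx.1, hx.2.trans (max_le hs.2 ht.2)⟩
  have hsub' : Icc (min s t) (max s t) ⊆ Icc (0:ℝ) 1 :=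
    fun x hx => ⟨(hsub hx).1.le, (hsub hx).2⟩
  have hφc : Continuous φ := by fun_prop
  have hσc : ContinuousOn (γ ∘ φ) (Icc 0 1) :=
    hγ.comp hφc.continuousOn (fun r hr => hsub' (hmem hr))
  have hσ0 : (γ ∘ φ) 0 = γ s := by simp [hφ]
  have hσ1 : (γ ∘ φ) 1 = γ t := by simp [hφ]
  have hσm : MapsTo (γ ∘ φ) (Icc 0 1) S := fun r hr => hmap (hsub (hmem hr))
  have hvar : eVariationOn (γ ∘ φ) (Icc 0 1) ≤ eVariationOn γ (Icc (min s t) (max s t)) := by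
    rcases le_total s t with h | h
    · refine eVariationOn.comp_le_of_monotoneOn γ φ ?_ hmem
      intro a ha b hb hab
      simp only [hφ]
      nlinarith
    · refine eVariationOn.comp_le_of_antitoneOn γ φ ?_ hmem
      intro a ha b hb hab
      simp only [hφ]
      nlinarith
  calc pathInf S (γ s) (γ t)
      ≤ eVariationOn (γ ∘ φ) (Icc 0 1) :=
        iInf_le_of_le (γ ∘ φ) (iInf_le_of_le hσc (iInf_le_of_le hσ0
          (iInf_le_of_le hσ1 (iInf_le_of_le hσm le_rfl))))
    _ ≤ _ := hvar

lemma evar_small {E : Type*} [PseudoEMetricSpace E] (γ : ℝ → E)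
    (hfin : eVariationOn γ (Icc 0 1) ≠ ⊤) {ε : ℝ} (hε : 0 < ε) :
    ∃ r0 ∈ Ioc (0:ℝ) 1, ∀ s t : ℝ, s ∈ Ioc (0:ℝ) 1 → t ∈ Ioc (0:ℝ) 1 → s ≤ r0 → t ≤ r0 →
      eVariationOn γ (Icc (min s t) (max s t)) ≤ ENNReal.ofReal ε := by
  set F : ℝ → ℝ≥0∞ := fun r => eVariationOn γ (Icc 0 r) with hF
  have hFle : ∀ r ∈ Ioc (0:ℝ) 1, F r ≤ eVariationOn γ (Icc 0 1) :=
    fun r hr => eVariationOn.mono γ (Icc_subset_Icc_right hr.2)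
  set L : ℝ≥0∞ := ⨅ r ∈ Ioc (0:ℝ) 1, F r with hL
  have hLne : L ≠ ⊤ := by
    refine ne_top_of_le_ne_top hfin ?_
    exact iInf_le_of_le 1 (iInf_le_of_le ⟨one_pos, le_refl 1⟩ (hFle 1 ⟨one_pos, le_refl 1⟩))
  have hlt : L < L + ENNReal.ofReal ε :=
    ENNReal.lt_add_right hLne (ENNReal.ofReal_pos.2 hε).ne'
  have : ∃ r ∈ Ioc (0:ℝ) 1, F r < L + ENNReal.ofReal ε := by
    by_contra hcon
    push_neg at hcon
    have : L + ENNReal.ofReal ε ≤ L := le_iInf₂ hcon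
    exact absurd hlt (not_lt.2 this)
  obtain ⟨r0, hr0, hFr0⟩ := this
  refine ⟨r0, hr0, fun s t hs ht hsr htr => ?_⟩
  set a := min s t
  set b := max s t
  have ha : a ∈ Ioc (0:ℝ) 1 := ⟨lt_min hs.1 ht.1, (min_le_left s t).trans hs.2⟩
  have hab : a ≤ b := min_le_max
  have hbr : b ≤ r0 := max_le hsr htr
  have key : F a + eVariationOn γ (Icc a b) = F b := by
    have := eVariationOn.Icc_add_Icc γ (s := univ) (le_of_lt ha.1) hab (mem_univ a)
    simpa [hF, univ_inter] using this
  have h1 : F b ≤ F r0 := eVariationOn.mono γ (Icc_subset_Icc_right hbr)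
  have h2 : L ≤ F a := iInf_le_of_le a (iInf_le_of_le ha le_rfl)
  have h3 : F a + eVariationOn γ (Icc a b) < F a + ENNReal.ofReal ε :=
    lt_of_le_of_lt (key.le.trans h1) (lt_of_lt_of_le hFr0 (add_le_add_left h2 _))
  have hFa : F a ≠ ⊤ := ne_top_of_le_ne_top hfin (hFle a ha)
  exact le_of_lt ((ENNReal.add_lt_add_iff_left hFa).1 h3)

section Part1

variable {V : Type} [Fintype V] {d : ℕ} {X : Type} [MetricSpace X] {e : X → Conf V d}

/-- key distance bound -/
lemma dist_le_of_small {T : LinkageType V}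
    (hm : ModelsPathMetric (EmbSet T d) X e)
    (γ : ℝ → Conf V d) (hγc : ContinuousOn γ (Icc 0 1))
    (hγm : MapsTo γ (Ioc 0 1) (EmbSet T d))
    {s t : ℝ} (hs : s ∈ Ioc (0:ℝ) 1) (ht : t ∈ Ioc (0:ℝ) 1)
    {a b : X} (ha : e a = γ s) (hb : e b = γ t)
    {ε : ℝ} (hε : 0 ≤ ε)
    (hvar : eVariationOn γ (Icc (min s t) (max s t)) ≤ ENNReal.ofReal ε) :
    dist a b ≤ ε := by
  have h1 : dist a b = (min (pathInf (EmbSet T d) (γ s) (γ t)) 1).toReal := by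
    rw [hm.dist_eq a b, dpath, ha, hb]
  have h2 : pathInf (EmbSet T d) (γ s) (γ t) ≤ ENNReal.ofReal ε :=
    (pathInf_le_evar _ γ hγc hγm hs ht).trans hvar
  rw [h1]
  exact ENNReal.toReal_le_of_le_ofReal hε ((min_le_left _ _).trans h2)

end Part1

/-- for every rectifiable continuous path `γ : [0,1] → (ℝ^d)^V` with
`γ((0,1]) ⊆ Emb(T_Γ)` and every sequence `t_i → 0` in `(0,1]`, the sequence `γ(t_i)` is
`d_path`-Cauchy; the point of `Êmb(T_Γ)` it represents does not depend on the chosen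
sequence; and the resulting map from rectifiable paths to `Êmb(T_Γ)` is surjective.  Here
`X` is an abstract metric space isometrically identified via `e` with
`(Emb(T_Γ), d_path)`, and `Êmb(T_Γ)` is its completion. -/
theorem stmt18 {V : Type} [Fintype V] (T : LinkageType V) (d : ℕ) (hd : 1 ≤ d)
    (X : Type) [MetricSpace X] (e : X → Conf V d)
    (hm : ModelsPathMetric (EmbSet T d) X e) :
    (∀ γ : ℝ → Conf V d, ContinuousOn γ (Set.Icc 0 1) →
      Set.MapsTo γ (Set.Ioc 0 1) (EmbSet T d) → eVariationOn γ (Set.Icc 0 1) ≠ ⊤ →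
      ((∀ t : ℕ → ℝ, (∀ i, t i ∈ Set.Ioc (0:ℝ) 1) →
          Filter.Tendsto t Filter.atTop (nhds 0) →
          ∀ u : ℕ → X, (∀ i, e (u i) = γ (t i)) → CauchySeq u) ∧
        (∀ t t' : ℕ → ℝ, (∀ i, t i ∈ Set.Ioc (0:ℝ) 1) →
          Filter.Tendsto t Filter.atTop (nhds 0) →
          (∀ i, t' i ∈ Set.Ioc (0:ℝ) 1) →
          Filter.Tendsto t' Filter.atTop (nhds 0) →
          ∀ u u' : ℕ → X, (∀ i, e (u i) = γ (t i)) → (∀ i, e (u' i) = γ (t' i)) →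
          ∀ z z' : UniformSpace.Completion X,
            Filter.Tendsto (fun i => ((u i : X) : UniformSpace.Completion X))
              Filter.atTop (nhds z) →
            Filter.Tendsto (fun i => ((u' i : X) : UniformSpace.Completion X))
              Filter.atTop (nhds z') →
            z = z'))) ∧
    (∀ z : UniformSpace.Completion X, ∃ γ : ℝ → Conf V d,
      ContinuousOn γ (Set.Icc 0 1) ∧
      Set.MapsTo γ (Set.Ioc 0 1) (EmbSet T d) ∧
      eVariationOn γ (Set.Icc 0 1) ≠ ⊤ ∧
      ∃ (t : ℕ → ℝ) (u : ℕ → X), (∀ i, t i ∈ Set.Ioc (0:ℝ) 1) ∧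
        Filter.Tendsto t Filter.atTop (nhds 0) ∧ (∀ i, e (u i) = γ (t i)) ∧
        Filter.Tendsto (fun i => ((u i : X) : UniformSpace.Completion X))
          Filter.atTop (nhds z)) := by
  constructor
  · intro γ hγc hγm hfin
    have key : ∀ ε : ℝ, 0 < ε → ∃ r0 : ℝ, 0 < r0 ∧
        ∀ s t : ℝ, s ∈ Ioc (0:ℝ) 1 → t ∈ Ioc (0:ℝ) 1 → s ≤ r0 → t ≤ r0 →
          ∀ a b : X, e a = γ s → e b = γ t → dist a b ≤ ε := by
      intro ε hε
      obtain ⟨r0, hr0, hsmall⟩ := evar_small γ hfin hε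
      exact ⟨r0, hr0.1, fun s t hs ht hsr htr a b ha hb =>
        dist_le_of_small hm γ hγc hγm hs ht ha hb hε.le (hsmall s t hs ht hsr htr)⟩
    constructor
    · intro t htIoc ht0 u hu
      rw [Metric.cauchySeq_iff]
      intro ε hε
      obtain ⟨r0, hr0, hbound⟩ := key (ε/2) (half_pos hε)
      have hev : ∀ᶠ i in atTop, t i < r0 := ht0.eventually (gt_mem_nhds hr0)
      obtain ⟨N, hN⟩ := eventually_atTop.1 hev
      refine ⟨N, fun m hm' n hn' => ?_⟩
      have := hbound (t m) (t n) (htIoc m) (htIoc n) (hN m hm').le (hN n hn').le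
        (u m) (u n) (hu m) (hu n)
      linarith [half_lt_self hε]
    · intro t t' htIoc ht0 ht'Ioc ht'0 u u' hu hu' z z' hz hz'
      have hdist : Tendsto (fun i => dist ((u i : UniformSpace.Completion X))
          ((u' i : UniformSpace.Completion X))) atTop (nhds (dist z z')) := hz.dist hz'
      have hle : ∀ ε : ℝ, 0 < ε → dist z z' ≤ ε := by
        intro ε hε
        obtain ⟨r0, hr0, hbound⟩ := key ε hε
        have hev : ∀ᶠ i in atTop, t i < r0 ∧ t' i < r0 :=
          (ht0.eventually (gt_mem_nhds hr0)).and (ht'0.eventually (gt_mem_nhds hr0))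
        refine le_of_tendsto hdist (hev.mono fun i hi => ?_)
        rw [UniformSpace.Completion.dist_eq]
        exact hbound (t i) (t' i) (htIoc i) (ht'Ioc i) hi.1.le hi.2.le
          (u i) (u' i) (hu i) (hu' i)
      have : dist z z' ≤ 0 := le_of_forall_gt_imp_ge_of_dense fun ε hε => hle ε hε
      exact eq_of_dist_eq_zero (le_antisymm this dist_nonneg)
  · intro z
    -- the geometric scale
    set b : ℕ → ℝ := fun n => (2⁻¹ : ℝ) ^ n with hbdef
    have hb_pos : ∀ n, 0 < b n := fun n => pow_pos (by norm_num) n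
    have hb_anti : ∀ {m n : ℕ}, m ≤ n → b n ≤ b m := fun {m n} h =>
      pow_le_pow_of_le_one (by norm_num) (by norm_num) h
    have hb_le1 : ∀ n, b n ≤ 1 := fun n => by
      simpa [hbdef] using hb_anti (Nat.zero_le n)
    have hb_succ : ∀ n, b n = 2 * b (n + 1) := fun n => by
      have h : b (n + 1) = b n * 2⁻¹ := pow_succ _ n
      rw [h]; ring
    have hb_lt : ∀ n, b (n + 1) < b n := fun n => by
      have := hb_pos (n + 1); rw [hb_succ n]; linarith
    have hb_tend : Tendsto b atTop (nhds 0) :=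
      tendsto_pow_atTop_nhds_zero_of_lt_one (by norm_num) (by norm_num)
    -- choose the approximating sequence
    have hdense : ∀ i : ℕ, ∃ x : X, dist z ((x : UniformSpace.Completion X)) < b i / 8 := by
      intro i
      have hz : z ∈ closure (Set.range ((↑) : X → UniformSpace.Completion X)) := by
        have := UniformSpace.Completion.denseRange_coe (α := X)
        exact this z
      obtain ⟨y, hy, hyd⟩ := Metric.mem_closure_iff.1 hz (b i / 8)
        (by positivity)
      obtain ⟨x, rfl⟩ := hy
      exact ⟨x, hyd⟩
    choose u hu using hdense
    have hui : ∀ i, dist (u i) (u (i + 1)) < b i / 4 := by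
      intro i
      have h1 := hu i
      have h2 := hu (i + 1)
      have h3 : b (i + 1) ≤ b i := (hb_lt i).le
      have : dist ((u i : UniformSpace.Completion X)) ((u (i+1) : UniformSpace.Completion X)) < b i / 4 := by
        calc dist ((u i : UniformSpace.Completion X)) ((u (i+1) : UniformSpace.Completion X))
            ≤ dist ((u i : UniformSpace.Completion X)) z + dist z ((u (i+1) : UniformSpace.Completion X)) := dist_triangle _ _ _
          _ < b i / 8 + b (i+1) / 8 := by rw [dist_comm ((u i : UniformSpace.Completion X)) z]; exact add_lt_add h1 h2
          _ ≤ b i / 4 := by linarith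
      rwa [UniformSpace.Completion.dist_eq] at this
    -- extract short paths between consecutive points
    have hpaths : ∀ i : ℕ, ∃ g : ℝ → Conf V d, ContinuousOn g (Icc 0 1) ∧
        g 0 = e (u i) ∧ g 1 = e (u (i + 1)) ∧ MapsTo g (Icc 0 1) (EmbSet T d) ∧
        eVariationOn g (Icc 0 1) < ENNReal.ofReal (b i) := by
      intro i
      have hdp : dpath (EmbSet T d) (e (u i)) (e (u (i + 1))) < b i / 4 := by
        rw [← hm.dist_eq]; exact hui i
      set P := pathInf (EmbSet T d) (e (u i)) (e (u (i + 1))) with hP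
      have hb4 : b i / 4 < 1 := by
        have := hb_le1 i; have := hb_pos i; linarith
      have hPlt1 : P < 1 := by
        by_contra hge
        push_neg at hge
        have : dpath (EmbSet T d) (e (u i)) (e (u (i + 1))) = 1 := by
          rw [dpath, ← hP, min_eq_right hge]; simp
        rw [this] at hdp; linarith
      have hPne : P ≠ ⊤ := (hPlt1.trans (by norm_num)).ne
      have hPto : P.toReal < b i / 4 := by
        have : dpath (EmbSet T d) (e (u i)) (e (u (i + 1))) = P.toReal := by
          rw [dpath, ← hP, min_eq_left hPlt1.le]
        rwa [this] at hdp
      have hPP : P < ENNReal.ofReal (b i) := by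
        conv_lhs => rw [← ENNReal.ofReal_toReal hPne]
        rw [ENNReal.ofReal_lt_ofReal_iff (hb_pos i)]
        have := hb_pos i; linarith
      rw [hP, pathInf] at hPP
      simp only [iInf_lt_iff] at hPP
      obtain ⟨g, hgc, hg0, hg1, hgm, hglt⟩ := hPP
      exact ⟨g, hgc, hg0, hg1, hgm, hglt⟩
    choose g hgc hg0 hg1 hgm hgvar using hpaths
    -- consecutive distances in the configuration space
    have hd1 : ∀ i, dist (e (u i)) (e (u (i + 1))) ≤ b i := by
      intro i
      have h := (eVariationOn.edist_le (g i)
        (left_mem_Icc.2 (by norm_num : (0:ℝ) ≤ 1)) (right_mem_Icc.2 (by norm_num : (0:ℝ) ≤ 1))).trans (hgvar i).le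
      rw [hg0 i, hg1 i] at h
      exact (edist_le_ofReal (hb_pos i).le).1 h
    have hsym : ∀ j m : ℕ, j ≤ m → dist (e (u j)) (e (u m)) ≤ 2 * b j - 2 * b m := by
      intro j m hjm
      obtain ⟨k, rfl⟩ := Nat.exists_eq_add_of_le hjm
      clear hjm
      induction k with
      | zero => simp
      | succ k ih =>
        calc dist (e (u j)) (e (u (j + (k + 1))))
            ≤ dist (e (u j)) (e (u (j + k))) + dist (e (u (j + k))) (e (u (j + k + 1))) := by
              rw [show j + (k+1) = j + k + 1 by ring]; exact dist_triangle _ _ _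
          _ ≤ (2 * b j - 2 * b (j + k)) + b (j + k) := add_le_add ih (hd1 (j + k))
          _ = 2 * b j - b (j + k) := by ring
          _ ≤ 2 * b j - 2 * b (j + (k + 1)) := by
              have := hb_succ (j + k)
              rw [show j + (k+1) = j + k + 1 by ring]; linarith
    have hcauchy : CauchySeq (fun i => e (u i)) := by
      apply cauchySeq_of_le_tendsto_0 (fun n => 2 * b n) (fun n m N hn hm' => ?_)
      · have h0 : Tendsto (fun n => 2 * b n) atTop (nhds (2 * 0)) := hb_tend.const_mul 2
        simpa using h0
      · rcases le_total n m with h | h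
        · calc dist (e (u n)) (e (u m)) ≤ 2 * b n - 2 * b m := hsym n m h
            _ ≤ 2 * b N := by have := hb_anti hn; have := hb_pos m; linarith
        · calc dist (e (u n)) (e (u m)) = dist (e (u m)) (e (u n)) := dist_comm _ _
            _ ≤ 2 * b m - 2 * b n := hsym m n h
            _ ≤ 2 * b N := by have := hb_anti hm'; have := hb_pos n; linarith
    obtain ⟨c, hc_lim⟩ := cauchySeq_tendsto_of_complete hcauchy
    have hdc : ∀ j, dist (e (u j)) c ≤ 2 * b j := by
      intro j
      have ht : Tendsto (fun m => dist (e (u j)) (e (u m))) atTop (nhds (dist (e (u j)) c)) :=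
        (tendsto_const_nhds).dist hc_lim
      refine le_of_tendsto ht (eventually_atTop.2 ⟨j, fun m hm' => ?_⟩)
      have := hsym j m hm'
      have := hb_pos m
      linarith
    -- the index function
    set Nt : ℝ → ℕ := fun t => sInf {n | b (n + 1) < t} with hNt
    have hNex : ∀ t : ℝ, 0 < t → {n | b (n + 1) < t}.Nonempty := by
      intro t ht
      obtain ⟨n, hn⟩ := ((hb_tend.comp (tendsto_add_atTop_nat 1)).eventually
        (gt_mem_nhds ht)).exists
      exact ⟨n, hn⟩
    have hN1 : ∀ t : ℝ, 0 < t → b (Nt t + 1) < t := fun t ht => Nat.sInf_mem (hNex t ht)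
    have hN2 : ∀ t : ℝ, 0 < t → t ≤ 1 → t ≤ b (Nt t) := by
      intro t ht ht1
      rcases Nat.eq_zero_or_pos (Nt t) with h0 | h0
      · rw [h0]; simpa [hbdef] using ht1
      · obtain ⟨m, hm'⟩ := Nat.exists_eq_succ_of_ne_zero h0.ne'
        have hmlt : m < Nt t := by omega
        have : ¬ b (m + 1) < t := fun hc => absurd (Nat.sInf_le hc) (not_le.2 hmlt)
        rw [hm']; exact not_lt.1 this
    have hNeq : ∀ (i : ℕ) (t : ℝ), b (i + 1) < t → t ≤ b i → Nt t = i := by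
      intro i t h1 h2
      refine le_antisymm (Nat.sInf_le h1) (le_of_not_gt fun hlt => ?_)
      have hle : Nt t + 1 ≤ i := hlt
      have : b i ≤ b (Nt t + 1) := hb_anti hle
      have hpos : 0 < t := lt_trans (hb_pos (i+1)) h1
      have := hN1 t hpos
      linarith
    -- the concatenated path
    set Γ : ℝ → Conf V d := fun t =>
      if h : 0 < t then g (Nt t) ((b (Nt t) - t) / b (Nt t + 1)) else c with hΓ
    have harg : ∀ (i : ℕ) (t : ℝ), t ∈ Icc (b (i + 1)) (b i) →
        (b i - t) / b (i + 1) ∈ Icc (0:ℝ) 1 := by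
      intro i t htm
      have hp := hb_pos (i + 1)
      have hs := hb_succ i
      constructor
      · apply div_nonneg _ hp.le; linarith [htm.2]
      · rw [div_le_one hp]; linarith [htm.1]
    have hpiece : ∀ i : ℕ, EqOn Γ (fun t => g i ((b i - t) / b (i + 1)))
        (Icc (b (i + 1)) (b i)) := by
      intro i t htm
      rcases eq_or_lt_of_le htm.1 with heq | hlt
      · -- t = b (i+1) : both sides are e (u (i+1))
        subst heq
        have hNi : Nt (b (i + 1)) = i + 1 := hNeq (i + 1) _ (hb_lt (i + 1)) le_rfl
        have hL : Γ (b (i + 1)) = e (u (i + 1)) := by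
          rw [hΓ]
          simp only [dif_pos (hb_pos (i + 1)), hNi, sub_self, zero_div]
          exact hg0 (i + 1)
        have hargeq : (b i - b (i + 1)) / b (i + 1) = 1 := by
          rw [div_eq_one_iff_eq (hb_pos (i + 1)).ne']
          linarith [hb_succ i]
        show Γ (b (i + 1)) = g i ((b i - b (i + 1)) / b (i + 1))
        rw [hL, hargeq, hg1 i]
      · have hpos : 0 < t := lt_trans (hb_pos (i + 1)) hlt
        have hNi : Nt t = i := hNeq i t hlt htm.2
        rw [hΓ]; simp only [dif_pos hpos, hNi]
    have hΓS : MapsTo Γ (Ioc 0 1) (EmbSet T d) := by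
      intro t htm
      have h1 := hN1 t htm.1
      have h2 := hN2 t htm.1 htm.2
      rw [hΓ]; simp only [dif_pos htm.1]
      exact hgm (Nt t) (harg (Nt t) t ⟨h1.le, h2⟩)
    have hvari : ∀ i : ℕ, eVariationOn Γ (Icc (b (i + 1)) (b i)) ≤ ENNReal.ofReal (b i) := by
      intro i
      rw [eVariationOn.eq_of_eqOn (hpiece i)]
      have hcomp : eVariationOn ((g i) ∘ (fun t => (b i - t) / b (i + 1)))
          (Icc (b (i + 1)) (b i)) ≤ eVariationOn (g i) (Icc 0 1) := by
        apply eVariationOn.comp_le_of_antitoneOn (g i) _ _ (fun t htm => harg i t htm)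
        intro x hx y hy hxy
        have hp := hb_pos (i + 1)
        rw [div_le_div_iff_of_pos_right hp]
        linarith
      exact (le_of_eq rfl).trans (hcomp.trans (hgvar i).le)
    have hvarn : ∀ n : ℕ, eVariationOn Γ (Icc (b n) 1) ≤ ENNReal.ofReal (2 - 2 * b n) := by
      intro n
      induction n with
      | zero =>
        have hb0 : b 0 = 1 := by simp [hbdef]
        rw [hb0, Icc_self]
        rw [eVariationOn.subsingleton Γ subsingleton_singleton]
        exact zero_le
      | succ n ih =>
        have key := eVariationOn.Icc_add_Icc Γ (s := univ) (hb_lt n).le (hb_le1 n) (mem_univ (b n))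
        simp only [univ_inter] at key
        calc eVariationOn Γ (Icc (b (n + 1)) 1)
            = eVariationOn Γ (Icc (b (n + 1)) (b n)) + eVariationOn Γ (Icc (b n) 1) := key.symm
          _ ≤ ENNReal.ofReal (b n) + ENNReal.ofReal (2 - 2 * b n) := add_le_add (hvari n) ih
          _ = ENNReal.ofReal (b n + (2 - 2 * b n)) := by
              rw [← ENNReal.ofReal_add (hb_pos n).le (by linarith [hb_le1 n])]
          _ = ENNReal.ofReal (2 - 2 * b (n + 1)) := by
              congr 1; linarith [hb_succ n]
    have hΓ0 : Γ 0 = c := by rw [hΓ]; simp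
    have hΓdyadic : ∀ i : ℕ, Γ (b i) = e (u i) := by
      intro i
      have hNi : Nt (b i) = i := hNeq i (b i) (hb_lt i) le_rfl
      rw [hΓ]; simp only [dif_pos (hb_pos i), hNi, sub_self, zero_div]
      exact hg0 i
    have hΓu : ∀ t : ℝ, t ∈ Ioc (0:ℝ) 1 → dist (Γ t) (e (u (Nt t))) ≤ b (Nt t) := by
      intro t htm
      have h1 := hN1 t htm.1
      have h2 := hN2 t htm.1 htm.2
      have hmem : (b (Nt t) - t) / b (Nt t + 1) ∈ Icc (0:ℝ) 1 := harg (Nt t) t ⟨h1.le, h2⟩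
      have hΓt : Γ t = g (Nt t) ((b (Nt t) - t) / b (Nt t + 1)) := by
        rw [hΓ]; simp only [dif_pos htm.1]
      have h := (eVariationOn.edist_le (g (Nt t)) hmem
        (left_mem_Icc.2 (by norm_num : (0:ℝ) ≤ 1))).trans (hgvar (Nt t)).le
      rw [hg0 (Nt t)] at h
      rw [hΓt]
      exact (edist_le_ofReal (hb_pos (Nt t)).le).1 h
    have hΓc : ∀ t : ℝ, t ∈ Ioc (0:ℝ) 1 → dist (Γ t) c ≤ 3 * b (Nt t) := by
      intro t htm
      calc dist (Γ t) c ≤ dist (Γ t) (e (u (Nt t))) + dist (e (u (Nt t))) c := dist_triangle _ _ _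
        _ ≤ b (Nt t) + 2 * b (Nt t) := add_le_add (hΓu t htm) (hdc (Nt t))
        _ = 3 * b (Nt t) := by ring
    have hΓc6 : ∀ t : ℝ, t ∈ Icc (0:ℝ) 1 → dist (Γ t) c ≤ 6 * t := by
      intro t htm
      rcases eq_or_lt_of_le htm.1 with heq | hpos
      · rw [← heq, hΓ0]; simp
      · have h1 := hN1 t hpos
        have hsucc := hb_succ (Nt t)
        have := hΓc t ⟨hpos, htm.2⟩
        have hblt : b (Nt t) < 2 * t := by rw [hsucc]; linarith
        linarith
    have hvar01 : eVariationOn Γ (Icc (0:ℝ) 1) ≤ ENNReal.ofReal 6 + ENNReal.ofReal 2 := by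
      apply evarIcc01_le
      · intro t htm
        rw [hΓ0, edist_comm]
        have h6 : dist (Γ t) c ≤ 6 := by
          have := hΓc6 t htm
          have := htm.2
          linarith
        exact (edist_le_ofReal (by norm_num)).2 h6
      · intro s hs hs1
        have hsub : Icc s 1 ⊆ Icc (b (Nt s + 1)) 1 :=
          Icc_subset_Icc_left (hN1 s hs).le
        refine (eVariationOn.mono Γ hsub).trans ((hvarn (Nt s + 1)).trans ?_)
        apply ENNReal.ofReal_le_ofReal
        have := hb_pos (Nt s + 1)
        linarith
    have hfinΓ : eVariationOn Γ (Icc (0:ℝ) 1) ≠ ⊤ :=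
      ne_top_of_le_ne_top (by simp [← ENNReal.ofReal_add]) hvar01
    -- continuity
    have hunion : ∀ {s t : Set ℝ}, IsClosed s → IsClosed t → ContinuousOn Γ s →
        ContinuousOn Γ t → ContinuousOn Γ (s ∪ t) := by
      intro s t hs ht h1 h2 x hx
      have hws : ContinuousWithinAt Γ s x := by
        by_cases h : x ∈ s
        · exact h1 x h
        · exact continuousWithinAt_of_notMem_closure (by rwa [hs.closure_eq])
      have hwt : ContinuousWithinAt Γ t x := by
        by_cases h : x ∈ t
        · exact h2 x h
        · exact continuousWithinAt_of_notMem_closure (by rwa [ht.closure_eq])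
      exact hws.union hwt
    have hcontn : ∀ n : ℕ, ContinuousOn Γ (Icc (b n) 1) := by
      intro n
      induction n with
      | zero =>
        have hb0 : b 0 = 1 := by simp [hbdef]
        rw [hb0, Icc_self]
        intro x hx
        rw [mem_singleton_iff] at hx
        subst hx
        exact continuousWithinAt_singleton
      | succ n ih =>
        have hun : Icc (b (n + 1)) 1 = Icc (b (n + 1)) (b n) ∪ Icc (b n) 1 :=
          (Icc_union_Icc_eq_Icc (hb_lt n).le (hb_le1 n)).symm
        rw [hun]
        refine hunion isClosed_Icc isClosed_Icc ?_ ih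
        have haff : Continuous (fun t : ℝ => (b n - t) / b (n + 1)) := by fun_prop
        have hgcont : ContinuousOn (fun t => g n ((b n - t) / b (n + 1)))
            (Icc (b (n + 1)) (b n)) :=
          (hgc n).comp haff.continuousOn (fun t htm => harg n t htm)
        exact hgcont.congr (hpiece n)
    have hΓcont : ContinuousOn Γ (Icc (0:ℝ) 1) := by
      intro x hx
      rcases eq_or_lt_of_le hx.1 with heq | hpos
      · -- continuity at 0
        rw [ContinuousWithinAt, ← heq, hΓ0]
        rw [tendsto_iff_dist_tendsto_zero]
        apply squeeze_zero' (Filter.Eventually.of_forall fun t => dist_nonneg)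
        · exact eventually_mem_nhdsWithin.mono fun t htm => hΓc6 t htm
        · have : Tendsto (fun t : ℝ => 6 * t) (nhdsWithin 0 (Icc 0 1)) (nhds (6 * 0)) :=
            ((continuous_const.mul continuous_id).tendsto 0).mono_left nhdsWithin_le_nhds
          simpa using this
      · have h1 := hN1 x hpos
        have hmem : Icc (b (Nt x + 1)) 1 ∈ nhdsWithin x (Icc 0 1) := by
          apply mem_nhdsWithin.2
          exact ⟨Ioi (b (Nt x + 1)), isOpen_Ioi, h1, fun y hy => ⟨le_of_lt hy.1, hy.2.2⟩⟩
        exact (hcontn (Nt x + 1) x ⟨h1.le, hx.2⟩).mono_of_mem_nhdsWithin hmem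
    -- conclusion
    refine ⟨Γ, hΓcont, hΓS, hfinΓ, b, u, fun i => ⟨hb_pos i, hb_le1 i⟩, hb_tend,
      fun i => (hΓdyadic i).symm, ?_⟩
    rw [tendsto_iff_dist_tendsto_zero]
    apply squeeze_zero (fun i => dist_nonneg) (fun i => ?_)
    · have h8 : Tendsto (fun i => b i / 8) atTop (nhds (0 / 8)) := hb_tend.div_const 8
      simpa using h8
    · rw [dist_comm]
      exact (hu i).le.trans (by linarith [hb_pos i])


end
end
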